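/- Suppose for each $j \in \{1, \dots, d\}$ we have a function $f_j : \mathbb{R}^d \to \mathbb{R}^m$, and define the weighted adjacency matrix $A \in \mathbb{R}^{d \times d}_{\geq 0}$ with $A_{ij} \geq 0$, $A_{jj} = 0$, such that whenever $A_{ij} = 0$ the function $f_j$ does not depend on coordinate $i$. If $\mathrm{Tr}\, e^{A} = d$, then the directed graph $G$ on $\{1,\dots,d\}$ with edge set $\{(i,j) : A_{ij} > 0\}$ is acyclic, and consequently each $f_j$ depends only on coordinates in the parent set $\pi_j = \{i : A_{ij} > 0\}$, which defines a DAG structure. -/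

import Mathlib

/-- A directed graph on `Fin d`, given by an edge relation, is acyclic if it contains no
nonempty closed directed walk. -/
def DiGraphAcyclic {d : ℕ} (E : Fin d → Fin d → Prop) : Prop :=
  ¬ ∃ (k : ℕ) (v : ℕ → Fin d), 1 ≤ k ∧ v k = v 0 ∧ ∀ i < k, E (v i) (v (i + 1))

lemma pow_entry_nonneg {d : ℕ} (A : Matrix (Fin d) (Fin d) ℝ)
    (hA : ∀ i j, 0 ≤ A i j) : ∀ (n : ℕ) (i j : Fin d), 0 ≤ (A ^ n) i j := by
  intro n
  induction n with
  | zero =>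
    intro i j
    simp only [pow_zero]
    by_cases h : i = j <;> simp [Matrix.one_apply, h]
  | succ n ih =>
    intro i j
    rw [pow_succ, Matrix.mul_apply]
    exact Finset.sum_nonneg fun l _ => mul_nonneg (ih i l) (hA l j)

lemma path_prod_le_pow_entry {d : ℕ} (A : Matrix (Fin d) (Fin d) ℝ)
    (hA : ∀ i j, 0 ≤ A i j) (v : ℕ → Fin d) :
    ∀ k : ℕ, (∏ i ∈ Finset.range k, A (v i) (v (i + 1))) ≤ (A ^ k) (v 0) (v k) := by
  intro k
  induction k with
  | zero => simp [Matrix.one_apply]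
  | succ k ih =>
    rw [Finset.prod_range_succ, pow_succ, Matrix.mul_apply]
    calc (∏ i ∈ Finset.range k, A (v i) (v (i + 1))) * A (v k) (v (k + 1))
        ≤ (A ^ k) (v 0) (v k) * A (v k) (v (k + 1)) := by
          apply mul_le_mul_of_nonneg_right ih (hA _ _)
      _ ≤ ∑ l, (A ^ k) (v 0) l * A l (v (k + 1)) := by
          apply Finset.single_le_sum (f := fun l => (A ^ k) (v 0) l * A l (v (k + 1)))
            (fun l _ => mul_nonneg (pow_entry_nonneg A hA k _ _) (hA _ _))
            (Finset.mem_univ (v k))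

/-- If each `f j` does not depend on coordinate `i` whenever `A i j = 0` (with `A` a
nonnegative weighted adjacency matrix with zero diagonal), and `Tr e^A = d`, then the graph
with edges `{(i,j) : A i j > 0}` is acyclic and each `f j` depends only on the coordinates in
its parent set `{i : A i j > 0}`. -/
theorem dag_structure_of_trace_exp_eq_dim {d m : ℕ}
    (f : Fin d → (Fin d → ℝ) → (Fin m → ℝ))
    (A : Matrix (Fin d) (Fin d) ℝ)
    (hA : ∀ i j, 0 ≤ A i j) (hdiag : ∀ j, A j j = 0)
    (hdep : ∀ i j, A i j = 0 →
      ∀ x x' : Fin d → ℝ, (∀ l, l ≠ i → x l = x' l) → f j x = f j x')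
    (htr : Matrix.trace (NormedSpace.exp A) = d) :
    DiGraphAcyclic (fun i j => 0 < A i j) ∧
      ∀ j, ∀ x x' : Fin d → ℝ, (∀ i, 0 < A i j → x i = x' i) → f j x = f j x' := by
  constructor
  · -- acyclicity
    -- First: trace (A ^ k) = 0 for all k ≥ 1
    letI : SeminormedRing (Matrix (Fin d) (Fin d) ℝ) := Matrix.linftyOpSemiNormedRing
    letI : NormedRing (Matrix (Fin d) (Fin d) ℝ) := Matrix.linftyOpNormedRing
    letI : NormedAlgebra ℝ (Matrix (Fin d) (Fin d) ℝ) := Matrix.linftyOpNormedAlgebra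
    have hsum : Summable fun n : ℕ => ((n.factorial : ℝ))⁻¹ • A ^ n :=
      NormedSpace.expSeries_summable' (𝕂 := ℝ) A
    let T : Matrix (Fin d) (Fin d) ℝ →L[ℝ] ℝ :=
      LinearMap.toContinuousLinearMap (Matrix.traceLinearMap (Fin d) ℝ ℝ)
    have h1 : HasSum (fun n : ℕ => ((n.factorial : ℝ))⁻¹ * Matrix.trace (A ^ n))
        (Matrix.trace (NormedSpace.exp A)) := by
      have h2 := hsum.hasSum.mapL T
      have h3 : ∀ n : ℕ, T (((n.factorial : ℝ))⁻¹ • A ^ n) = ((n.factorial : ℝ))⁻¹ * Matrix.trace (A ^ n) := by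
        intro n
        simp [T, smul_eq_mul]
      simp only [h3] at h2
      have hexp : NormedSpace.exp A = ∑' n : ℕ, ((n.factorial : ℝ))⁻¹ • A ^ n :=
        congrFun (NormedSpace.exp_eq_tsum ℝ) A
      rw [hexp]
      exact h2
    have hnn : ∀ n : ℕ, 0 ≤ ((n.factorial : ℝ))⁻¹ * Matrix.trace (A ^ n) := by
      intro n
      apply mul_nonneg (inv_nonneg.2 (Nat.cast_nonneg _))
      rw [Matrix.trace]
      exact Finset.sum_nonneg fun i _ => pow_entry_nonneg A hA n i i
    have h0 : (((0:ℕ).factorial : ℝ))⁻¹ * Matrix.trace (A ^ 0) = d := by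
      simp [Matrix.trace_one]
    have hz : ∀ k : ℕ, 1 ≤ k → Matrix.trace (A ^ k) = 0 := by
      intro k hk
      have hle : (((0:ℕ).factorial : ℝ))⁻¹ * Matrix.trace (A ^ 0) + ((k.factorial : ℝ))⁻¹ * Matrix.trace (A ^ k)
          ≤ Matrix.trace (NormedSpace.exp A) := by
        have := sum_le_hasSum ({0, k} : Finset ℕ) (fun n _ => hnn n) h1
        rwa [Finset.sum_pair (by omega : (0 : ℕ) ≠ k)] at this
      rw [htr, h0] at hle
      have : ((k.factorial : ℝ))⁻¹ * Matrix.trace (A ^ k) = 0 :=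
        le_antisymm (by linarith) (hnn k)
      have hkpos : (0 : ℝ) < ((k.factorial : ℝ))⁻¹ := by
        apply inv_pos.2
        exact_mod_cast Nat.factorial_pos k
      exact (mul_eq_zero.1 this).resolve_left (ne_of_gt hkpos)
    -- now derive acyclicity
    rintro ⟨k, v, hk, hclose, hedge⟩
    have hprod : 0 < ∏ i ∈ Finset.range k, A (v i) (v (i + 1)) :=
      Finset.prod_pos fun i hi => hedge i (Finset.mem_range.1 hi)
    have h5 : (0 : ℝ) < (A ^ k) (v 0) (v 0) := by
      have := path_prod_le_pow_entry A hA v k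
      rw [hclose] at this
      exact lt_of_lt_of_le hprod this
    have h6 : (A ^ k) (v 0) (v 0) ≤ Matrix.trace (A ^ k) := by
      rw [Matrix.trace]
      exact Finset.single_le_sum (fun i _ => pow_entry_nonneg A hA k i i) (Finset.mem_univ (v 0))
    rw [hz k hk] at h6
    linarith
  · -- dependence only on parents
    intro j x x' hxx'
    -- change coordinates one at a time
    have key : ∀ (s : Finset (Fin d)) (y y' : Fin d → ℝ),
        (∀ i, i ∉ s → y i = y' i) → (∀ i ∈ s, A i j = 0) → f j y = f j y' := by
      intro s
      induction s using Finset.induction_on with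
      | empty =>
        intro y y' h _
        have : y = y' := funext fun i => h i (Finset.notMem_empty i)
        rw [this]
      | @insert a s ha ih =>
        intro y y' h hz
        have h1 : f j y = f j (Function.update y a (y' a)) := by
          apply hdep a j (hz a (Finset.mem_insert_self a s))
          intro l hl
          rw [Function.update_of_ne hl]
        rw [h1]
        apply ih
        · intro i hi
          by_cases hia : i = a
          · subst hia; simp [Function.update_self]
          · rw [Function.update_of_ne hia]
            exact h i (by simp [hia, hi])
        · intro i hi
          exact hz i (Finset.mem_insert_of_mem hi)
    apply key (Finset.univ.filter fun i => A i j = 0) x x'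
    · intro i hi
      simp only [Finset.mem_filter, Finset.mem_univ, true_and] at hi
      exact hxx' i (lt_of_le_of_ne (hA i j) fun h => hi h.symm)
    · intro i hi
      simp only [Finset.mem_filter] at hi
      exact hi.2
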